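/- Let F be a field, p a monic irreducible polynomial of degree s over F, and let G_1 ∈ M_{sa}(F) and G_2 ∈ M_{sb}(F) be the generalized Jordan blocks of sizes a and b associated with p, with a ≤ b. If T is an sa × sb matrix over F satisfying G_1 T = T G_2, then the last s(b-a) columns of T are zero and the left sa × sa submatrix T_1 of T (formed by the first sa columns) commutes with G_1, i.e. T = [T_1, 0] with T_1 ∈ Z(G_1). -/

import Mathlib

open Matrix Polynomial

/-- The companion matrix of a monic polynomial `p` of degree `s`:
ones on the first subdiagonal, `-(coefficients of p)` in the last column. -/
def companionMat (F : Type*) [Field F] (s : ℕ) (p : Polynomial F) :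
    Matrix (Fin s) (Fin s) F :=
  Matrix.of fun i j =>
    if (j : ℕ) = s - 1 then -p.coeff (i : ℕ)
    else if (i : ℕ) = (j : ℕ) + 1 then 1 else 0

/-- The matrix `E` whose `(1,s)` entry is `1` and all other entries are `0`. -/
def Emat (F : Type*) [Field F] (s : ℕ) : Matrix (Fin s) (Fin s) F :=
  Matrix.of fun i j => if (i : ℕ) = 0 ∧ (j : ℕ) = s - 1 then 1 else 0

/-- The generalized Jordan block of size `ℓ` associated with `p` (degree `s`):
the `sℓ × sℓ` block matrix with `ℓ` diagonal `s×s` blocks equal to the companion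
matrix `C` of `p`, blocks `E` directly below the diagonal, zeros elsewhere.
Rows/columns are indexed by `Fin ℓ × Fin s` (block index, index within block). -/
def genJordanBlock (F : Type*) [Field F] (s ℓ : ℕ) (p : Polynomial F) :
    Matrix (Fin ℓ × Fin s) (Fin ℓ × Fin s) F :=
  Matrix.of fun x y =>
    if x.1 = y.1 then companionMat F s p x.2 y.2
    else if (x.1 : ℕ) = (y.1 : ℕ) + 1 then Emat F s x.2 y.2 else 0

section aux

variable {F : Type*} [Field F] {s : ℕ} (p : Polynomial F)

lemma gjb_apply {ℓ : ℕ} (m l : Fin ℓ) (r j : Fin s) :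
    genJordanBlock F s ℓ p (m, r) (l, j) =
      if m = l then companionMat F s p r j
      else if (m : ℕ) = (l : ℕ) + 1 then Emat F s r j else 0 := rfl

lemma companion_apply_ne_last (r : Fin s) (n : ℕ) (hn : n + 1 < s) :
    companionMat F s p r ⟨n, by omega⟩ = if (r : ℕ) = n + 1 then 1 else 0 := by
  simp only [companionMat, Matrix.of_apply]
  split_ifs with h1 h2 h3 <;> first | rfl | omega

lemma companion_apply_last (hs : 0 < s) (r : Fin s) :
    companionMat F s p r ⟨s - 1, by omega⟩ = -p.coeff (r : ℕ) := by
  simp only [companionMat, Matrix.of_apply]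
  split_ifs with h1 <;> first | rfl | omega

lemma emat_apply_last (hs : 0 < s) (r : Fin s) :
    Emat F s r ⟨s - 1, by omega⟩ = if (r : ℕ) = 0 then 1 else 0 := by
  simp only [Emat, Matrix.of_apply]
  split_ifs with h1 h2 <;> first | rfl | (exfalso; omega) | (exfalso; tauto) | skip
  all_goals (exfalso; exact h1 ⟨h2, by omega⟩)

lemma emat_apply_ne_last (r : Fin s) (n : ℕ) (hn : n + 1 < s) :
    Emat F s r ⟨n, by omega⟩ = 0 := by
  simp only [Emat, Matrix.of_apply]
  split_ifs with h1
  · exfalso; omega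
  · rfl

lemma mulG_ne_last {a ℓ : ℕ} (M : Matrix (Fin a × Fin s) (Fin ℓ × Fin s) F)
    (x : Fin a × Fin s) (l : Fin ℓ) (n : ℕ) (hn : n + 1 < s) :
    (M * genJordanBlock F s ℓ p) x (l, ⟨n, by omega⟩) = M x (l, ⟨n + 1, hn⟩) := by
  rw [Matrix.mul_apply, Fintype.sum_prod_type]
  rw [Finset.sum_eq_single l]
  · rw [Finset.sum_eq_single (⟨n + 1, hn⟩ : Fin s)]
    · rw [gjb_apply, if_pos rfl, companion_apply_ne_last p _ n hn,
        if_pos (by simp), mul_one]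
    · intro r _ hr
      rw [gjb_apply, if_pos rfl, companion_apply_ne_last p _ n hn,
        if_neg (by simpa [Fin.ext_iff] using hr), mul_zero]
    · intro h; exact absurd (Finset.mem_univ _) h
  · intro m _ hm
    apply Finset.sum_eq_zero
    intro r _
    rw [gjb_apply, if_neg hm]
    rcases eq_or_ne ((m : ℕ)) ((l : ℕ) + 1) with h | h
    · rw [if_pos h, emat_apply_ne_last r n hn, mul_zero]
    · rw [if_neg h, mul_zero]
  · intro h; exact absurd (Finset.mem_univ _) h

lemma mulG_last_aux {a ℓ : ℕ} (hs : 0 < s) (M : Matrix (Fin a × Fin s) (Fin ℓ × Fin s) F)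
    (x : Fin a × Fin s) (l : Fin ℓ) (m : Fin ℓ) (hm : m ≠ l) (hm2 : (m : ℕ) ≠ (l : ℕ) + 1) :
    ∑ r : Fin s, M x (m, r) * genJordanBlock F s ℓ p (m, r) (l, ⟨s - 1, by omega⟩) = 0 := by
  apply Finset.sum_eq_zero
  intro r _
  rw [gjb_apply, if_neg hm, if_neg hm2, mul_zero]

lemma mulG_last {a ℓ : ℕ} (hs : 0 < s) (M : Matrix (Fin a × Fin s) (Fin ℓ × Fin s) F)
    (x : Fin a × Fin s) (l : Fin ℓ) (hl : (l : ℕ) + 1 < ℓ) :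
    (M * genJordanBlock F s ℓ p) x (l, ⟨s - 1, by omega⟩) =
      (-∑ r : Fin s, p.coeff (r : ℕ) * M x (l, r)) + M x (⟨(l : ℕ) + 1, hl⟩, ⟨0, hs⟩) := by
  rw [Matrix.mul_apply, Fintype.sum_prod_type]
  rw [← Finset.add_sum_erase (a := l) _ _ (Finset.mem_univ l)]
  have hmem : (⟨(l : ℕ) + 1, hl⟩ : Fin ℓ) ∈ Finset.univ.erase l := by
    simp [Fin.ext_iff]
  rw [Finset.sum_eq_single_of_mem _ hmem]
  · congr 1
    · rw [← Finset.sum_neg_distrib]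
      apply Finset.sum_congr rfl
      intro r _
      rw [gjb_apply, if_pos rfl, companion_apply_last p hs r]
      ring
    · rw [Finset.sum_eq_single (⟨0, hs⟩ : Fin s)]
      · rw [gjb_apply, if_neg (by simp [Fin.ext_iff]), if_pos (by simp),
          emat_apply_last hs, if_pos (by simp), mul_one]
      · intro r _ hr
        rw [gjb_apply, if_neg (by simp [Fin.ext_iff]), if_pos (by simp),
          emat_apply_last hs, if_neg (by simpa [Fin.ext_iff] using hr), mul_zero]
      · intro h; exact absurd (Finset.mem_univ _) h
  · intro m hm hm2
    exact mulG_last_aux p hs M x l m (Finset.ne_of_mem_erase hm)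
      (by simpa [Fin.ext_iff] using hm2)

lemma mulG_last_end {a ℓ : ℕ} (hs : 0 < s) (M : Matrix (Fin a × Fin s) (Fin ℓ × Fin s) F)
    (x : Fin a × Fin s) (l : Fin ℓ) (hl : (l : ℕ) + 1 = ℓ) :
    (M * genJordanBlock F s ℓ p) x (l, ⟨s - 1, by omega⟩) =
      -∑ r : Fin s, p.coeff (r : ℕ) * M x (l, r) := by
  rw [Matrix.mul_apply, Fintype.sum_prod_type]
  rw [Finset.sum_eq_single l]
  · rw [← Finset.sum_neg_distrib]
    apply Finset.sum_congr rfl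
    intro r _
    rw [gjb_apply, if_pos rfl, companion_apply_last p hs r]
    ring
  · intro m _ hm
    apply mulG_last_aux p hs M x l m hm
    have := m.isLt; omega
  · intro h; exact absurd (Finset.mem_univ _) h

end aux

section rec

variable {F : Type*} [Field F] {s : ℕ} {p : Polynomial F}

lemma sum_mulVec {ι m n : Type*} [Fintype n] [DecidableEq ι] (t : Finset ι)
    (f : ι → Matrix m n F) (v : n → F) :
    (∑ i ∈ t, f i).mulVec v = ∑ i ∈ t, (f i).mulVec v := by
  classical
  induction t using Finset.induction_on with
  | empty => simp [Matrix.zero_mulVec]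
  | insert i t' h ih =>
                   rw [Finset.sum_insert h, Finset.sum_insert h, Matrix.add_mulVec, ih]

lemma aeval_gjb_eq (hs : 0 < s) (hmonic : p.Monic) (hdeg : p.natDegree = s) {a : ℕ} :
    aeval (genJordanBlock F s a p) p =
      genJordanBlock F s a p * (genJordanBlock F s a p) ^ (s - 1) +
        ∑ r : Fin s, p.coeff (r : ℕ) • (genJordanBlock F s a p) ^ (r : ℕ) := by
  set G := genJordanBlock F s a p
  have h1 : aeval G p = ∑ i ∈ Finset.range (s + 1), p.coeff i • G ^ i := by
    rw [aeval_eq_sum_range, hdeg]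
  rw [h1, Finset.sum_range_succ]
  have h2 : p.coeff s = 1 := by rw [← hdeg]; exact hmonic.coeff_natDegree
  rw [h2, one_smul]
  have h3 : G ^ s = G * G ^ (s - 1) := by
    rw [← pow_succ', Nat.sub_add_cancel hs]
  rw [h3, ← Fin.sum_univ_eq_sum_range (fun i => p.coeff i • G ^ i) s, add_comm]

lemma aeval_gjb_mulVec (hs : 0 < s) (hmonic : p.Monic) (hdeg : p.natDegree = s) {a : ℕ}
    (v : Fin a × Fin s → F) :
    (aeval (genJordanBlock F s a p) p).mulVec v =
      (genJordanBlock F s a p).mulVec (((genJordanBlock F s a p) ^ (s - 1)).mulVec v) +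
        ∑ r : Fin s, p.coeff (r : ℕ) • ((genJordanBlock F s a p) ^ (r : ℕ)).mulVec v := by
  rw [aeval_gjb_eq hs hmonic hdeg, Matrix.add_mulVec, Matrix.mulVec_mulVec, _root_.sum_mulVec]
  congr 1
  apply Finset.sum_congr rfl
  intro r _
  rw [Matrix.smul_mulVec]

end rec

section cols

variable {F : Type*} [Field F] {s : ℕ} {p : Polynomial F}
variable {a b : ℕ} {U : Matrix (Fin a × Fin s) (Fin b × Fin s) F}

lemma col_rec (hU : genJordanBlock F s a p * U = U * genJordanBlock F s b p)
    (l : Fin b) (n : ℕ) (hn : n + 1 < s) :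
    (fun x => U x (l, ⟨n + 1, hn⟩)) =
      (genJordanBlock F s a p).mulVec (fun x => U x (l, ⟨n, by omega⟩)) := by
  funext x
  have h := congrFun (congrFun hU x) ((l, ⟨n, by omega⟩) : Fin b × Fin s)
  rw [mulG_ne_last p U x l n hn] at h
  rw [← h, Matrix.mul_apply]
  simp [Matrix.mulVec, dotProduct]

lemma col_pow (hU : genJordanBlock F s a p * U = U * genJordanBlock F s b p)
    (hs : 0 < s) (l : Fin b) : ∀ (n : ℕ) (hn : n < s),
    (fun x => U x (l, ⟨n, hn⟩)) =
      ((genJordanBlock F s a p) ^ n).mulVec (fun x => U x (l, ⟨0, hs⟩)) := by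
  intro n
  induction n with
  | zero => intro hn; simp [Matrix.one_mulVec]
  | succ n ih =>
    intro hn
    rw [col_rec hU l n hn, ih (by omega), Matrix.mulVec_mulVec, ← pow_succ']

lemma col_pow' (hU : genJordanBlock F s a p * U = U * genJordanBlock F s b p)
    (hs : 0 < s) (l : Fin b) (r : Fin s) :
    (fun x => U x (l, r)) =
      ((genJordanBlock F s a p) ^ (r : ℕ)).mulVec (fun x => U x (l, ⟨0, hs⟩)) := by
  simpa using col_pow hU hs l (r : ℕ) r.isLt

lemma col_block (hU : genJordanBlock F s a p * U = U * genJordanBlock F s b p)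
    (hs : 0 < s) (hmonic : p.Monic) (hdeg : p.natDegree = s) (hb : 0 < b) :
    ∀ (n : ℕ) (hn : n < b),
    (fun x => U x (⟨n, hn⟩, ⟨0, hs⟩)) =
      ((aeval (genJordanBlock F s a p) p) ^ n).mulVec
        (fun x => U x (⟨0, hb⟩, ⟨0, hs⟩)) := by
  intro n
  induction n with
  | zero => intro hn; simp [Matrix.one_mulVec]
  | succ n ih =>
    intro hn
    have hn' : n < b := by omega
    have key : (fun x => U x (⟨n + 1, hn⟩, ⟨0, hs⟩)) =
        (genJordanBlock F s a p).mulVec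
            (fun x => U x (⟨n, hn'⟩, ⟨s - 1, by omega⟩)) +
          ∑ r : Fin s, p.coeff (r : ℕ) • (fun x => U x (⟨n, hn'⟩, r)) := by
      funext x
      have h := congrFun (congrFun hU x) ((⟨n, hn'⟩, ⟨s - 1, by omega⟩) : Fin b × Fin s)
      rw [mulG_last p hs U x ⟨n, hn'⟩ (show ((⟨n, hn'⟩ : Fin b) : ℕ) + 1 < b from hn)] at h
      simp only [Fin.val_mk] at h
      have hGU : (genJordanBlock F s a p).mulVec
          (fun k => U k (⟨n, hn'⟩, ⟨s - 1, by omega⟩)) x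
          = (genJordanBlock F s a p * U) x (⟨n, hn'⟩, ⟨s - 1, by omega⟩) := by
        simp [Matrix.mulVec, dotProduct, Matrix.mul_apply]
      simp only [Pi.add_apply, Finset.sum_apply, Pi.smul_apply, smul_eq_mul]
      rw [hGU, h]
      ring
    have hsum : (∑ r : Fin s, p.coeff (r : ℕ) • (fun x => U x ((⟨n, hn'⟩ : Fin b), r))) =
        ∑ r : Fin s, p.coeff (r : ℕ) •
          ((genJordanBlock F s a p) ^ (r : ℕ)).mulVec
            (fun x => U x (⟨n, hn'⟩, ⟨0, hs⟩)) :=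
      Finset.sum_congr rfl fun r _ => by rw [col_pow' hU hs _ r]
    rw [key, col_pow hU hs (⟨n, hn'⟩ : Fin b) (s - 1) (by omega), hsum, ih hn',
      pow_succ', ← Matrix.mulVec_mulVec, aeval_gjb_mulVec hs hmonic hdeg]

lemma col_last (hU : genJordanBlock F s a p * U = U * genJordanBlock F s b p)
    (hs : 0 < s) (hmonic : p.Monic) (hdeg : p.natDegree = s) (hb : 0 < b) :
    ((aeval (genJordanBlock F s a p) p) ^ b).mulVec
      (fun x => U x (⟨0, hb⟩, ⟨0, hs⟩)) = 0 := by
  have hb1 : b - 1 < b := by omega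
  have h0 : (aeval (genJordanBlock F s a p) p).mulVec
      (fun x => U x (⟨b - 1, hb1⟩, ⟨0, hs⟩)) = 0 := by
    rw [aeval_gjb_mulVec hs hmonic hdeg,
      ← col_pow hU hs (⟨b - 1, hb1⟩ : Fin b) (s - 1) (by omega)]
    have hsum : (∑ r : Fin s, p.coeff (r : ℕ) •
        ((genJordanBlock F s a p) ^ (r : ℕ)).mulVec
          (fun x => U x (⟨b - 1, hb1⟩, ⟨0, hs⟩))) =
        ∑ r : Fin s, p.coeff (r : ℕ) • (fun x => U x ((⟨b - 1, hb1⟩ : Fin b), r)) :=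
      Finset.sum_congr rfl fun r _ => by rw [col_pow' hU hs _ r]
    rw [hsum]
    funext x
    have h := congrFun (congrFun hU x) ((⟨b - 1, hb1⟩, ⟨s - 1, by omega⟩) : Fin b × Fin s)
    rw [mulG_last_end p hs U x ⟨b - 1, hb1⟩ (show ((⟨b - 1, hb1⟩ : Fin b) : ℕ) + 1 = b by
      simp only [Fin.val_mk]; omega)] at h
    have hGU : (genJordanBlock F s a p).mulVec
        (fun k => U k (⟨b - 1, hb1⟩, ⟨s - 1, by omega⟩)) x
        = (genJordanBlock F s a p * U) x (⟨b - 1, hb1⟩, ⟨s - 1, by omega⟩) := by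
      simp [Matrix.mulVec, dotProduct, Matrix.mul_apply]
    simp only [Pi.add_apply, Finset.sum_apply, Pi.smul_apply, smul_eq_mul, Pi.zero_apply]
    rw [hGU, h]
    ring
  have hbsplit : b = (b - 1) + 1 := by omega
  have e1 : ((aeval (genJordanBlock F s a p) p) ^ b).mulVec
      (fun x => U x (⟨0, hb⟩, ⟨0, hs⟩)) =
      (aeval (genJordanBlock F s a p) p).mulVec
        (((aeval (genJordanBlock F s a p) p) ^ (b - 1)).mulVec
          (fun x => U x (⟨0, hb⟩, ⟨0, hs⟩))) := by
    rw [Matrix.mulVec_mulVec, ← pow_succ', ← hbsplit]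
  rw [e1, ← col_block hU hs hmonic hdeg hb (b - 1) hb1, h0]

end cols

section main

variable {F : Type*} [Field F] {s : ℕ} {p : Polynomial F}

lemma commute_gjb_aeval {a : ℕ} :
    Commute (genJordanBlock F s a p) (aeval (genJordanBlock F s a p) p) := by
  unfold Commute SemiconjBy
  have h : aeval (genJordanBlock F s a p) (X * p) = aeval (genJordanBlock F s a p) (p * X) := by
    rw [mul_comm]
  simpa [_root_.map_mul, aeval_X] using h

lemma aeval_gjb_pow_eq_zero (hs : 0 < s) (hmonic : p.Monic) (hdeg : p.natDegree = s)
    {a : ℕ} (ha : 0 < a) :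
    (aeval (genJordanBlock F s a p) p) ^ a = 0 := by
  set G := genJordanBlock F s a p with hG
  set P := aeval (genJordanBlock F s a p) p with hP
  have hU : G * (1 : Matrix (Fin a × Fin s) (Fin a × Fin s) F) = 1 * G := by
    rw [mul_one, one_mul]
  have hlast := col_last (U := (1 : Matrix (Fin a × Fin s) (Fin a × Fin s) F))
    hU hs hmonic hdeg ha
  ext x y
  obtain ⟨l, j⟩ := y
  have hcol : (fun k => (1 : Matrix (Fin a × Fin s) (Fin a × Fin s) F) k (l, j)) =
      (G ^ (j : ℕ)).mulVec ((P ^ (l : ℕ)).mulVec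
        (fun k => (1 : Matrix (Fin a × Fin s) (Fin a × Fin s) F) k (⟨0, ha⟩, ⟨0, hs⟩))) := by
    rw [col_pow' (U := (1 : Matrix (Fin a × Fin s) (Fin a × Fin s) F)) hU hs l j,
      show ((l : Fin a), (⟨0, hs⟩ : Fin s)) = ((⟨(l : ℕ), l.isLt⟩ : Fin a), (⟨0, hs⟩ : Fin s))
        by simp,
      col_block (U := (1 : Matrix (Fin a × Fin s) (Fin a × Fin s) F)) hU hs hmonic hdeg ha
        (l : ℕ) l.isLt]
  have hPx : (P ^ a) x (l, j) = ((P ^ a).mulVec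
      (fun k => (1 : Matrix (Fin a × Fin s) (Fin a × Fin s) F) k (l, j))) x := by
    simp only [Matrix.mulVec, dotProduct]
    rw [← Matrix.mul_apply, mul_one]
  rw [hPx, hcol, Matrix.mulVec_mulVec, Matrix.mulVec_mulVec]
  have hc1 : Commute P G := commute_gjb_aeval.symm
  have hcomm : P ^ a * G ^ (j : ℕ) * P ^ (l : ℕ) =
      G ^ (j : ℕ) * P ^ (l : ℕ) * P ^ a := by
    rw [(hc1.pow_pow a (j : ℕ)).eq, mul_assoc, mul_assoc,
      ((Commute.refl P).pow_pow a (l : ℕ)).eq]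
  rw [hcomm, ← Matrix.mulVec_mulVec, hlast, Matrix.mulVec_zero]
  simp

end main

/-- if `G_1, G_2` are generalized Jordan blocks of sizes `a ≤ b`
associated with a monic irreducible `p` of degree `s` and `G_1 T = T G_2`, then
`T = [T_1, 0]` with `T_1 ∈ Z(G_1)`: the last `s(b-a)` columns of `T` vanish and the
left `sa × sa` submatrix commutes with `G_1`. -/
theorem intertwiner_genJordanBlocks_le
    {F : Type*} [Field F] {s a b : ℕ} (hab : a ≤ b)
    (p : Polynomial F) (hmonic : p.Monic) (hirr : Irreducible p)
    (hdeg : p.natDegree = s)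
    (T : Matrix (Fin a × Fin s) (Fin b × Fin s) F)
    (hT : genJordanBlock F s a p * T = T * genJordanBlock F s b p) :
    (∀ (x : Fin a × Fin s) (y : Fin b × Fin s), a ≤ (y.1 : ℕ) → T x y = 0) ∧
    (Matrix.of fun x y : Fin a × Fin s =>
        T x (⟨(y.1 : ℕ), by have := y.1.isLt; omega⟩, y.2)) *
        genJordanBlock F s a p =
      genJordanBlock F s a p *
        (Matrix.of fun x y : Fin a × Fin s =>
          T x (⟨(y.1 : ℕ), by have := y.1.isLt; omega⟩, y.2)) := by
  have hs : 0 < s := by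
    rcases Nat.eq_zero_or_pos p.natDegree with h | h
    · exact absurd (hmonic.natDegree_eq_zero.mp h ▸ isUnit_one) hirr.not_isUnit
    · omega
  have part1 : ∀ (x : Fin a × Fin s) (y : Fin b × Fin s), a ≤ (y.1 : ℕ) → T x y = 0 := by
    intro x y hy
    obtain ⟨l, j⟩ := y
    have hy' : a ≤ (l : ℕ) := hy
    have hb : 0 < b := l.pos
    have ha : 0 < a := x.1.pos
    have hcol : (fun k => T k (l, j)) =
        ((genJordanBlock F s a p) ^ (j : ℕ)).mulVec
          (((aeval (genJordanBlock F s a p) p) ^ (l : ℕ)).mulVec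
            (fun k => T k (⟨0, hb⟩, ⟨0, hs⟩))) := by
      rw [col_pow' hT hs l j,
        show ((l : Fin b), (⟨0, hs⟩ : Fin s)) = ((⟨(l : ℕ), l.isLt⟩ : Fin b), (⟨0, hs⟩ : Fin s))
          by simp,
        col_block hT hs hmonic hdeg hb (l : ℕ) l.isLt]
    have hPl : (aeval (genJordanBlock F s a p) p) ^ (l : ℕ) = 0 := by
      rw [show (l : ℕ) = a + ((l : ℕ) - a) by omega, pow_add,
        aeval_gjb_pow_eq_zero hs hmonic hdeg ha, zero_mul]
    have := congrFun hcol x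
    simpa [hPl, Matrix.zero_mulVec, Matrix.mulVec_zero] using this
  refine ⟨part1, ?_⟩
  rcases Nat.eq_zero_or_pos a with ha | ha
  · subst ha
    funext x y
    exact absurd x.1.pos (by omega)
  · ext x y
    set e : Fin a × Fin s → Fin b × Fin s := fun k => (⟨(k.1 : ℕ), by omega⟩, k.2) with he
    have hinj : Function.Injective e := by
      intro k1 k2 h
      simp only [he, Prod.ext_iff, Fin.ext_iff] at h ⊢
      exact h
    have hGb : ∀ k : Fin a × Fin s,
        genJordanBlock F s b p (e k) (e y) = genJordanBlock F s a p k y := by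
      intro k
      rw [show e k = (⟨(k.1 : ℕ), by omega⟩, k.2) from rfl,
        show e y = (⟨(y.1 : ℕ), by omega⟩, y.2) from rfl, gjb_apply, gjb_apply]
      by_cases h1 : k.1 = y.1
      · rw [if_pos h1, if_pos (by simp [Fin.ext_iff, h1])]
      · rw [if_neg h1, if_neg (fun h => h1 (Fin.ext (by simpa [Fin.ext_iff] using h)))]
    have hrhs : (genJordanBlock F s a p *
        (Matrix.of fun x y : Fin a × Fin s =>
          T x (⟨(y.1 : ℕ), by have := y.1.isLt; omega⟩, y.2))) x y
        = (T * genJordanBlock F s b p) x (e y) := by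
      rw [← hT, Matrix.mul_apply, Matrix.mul_apply]
      rfl
    have hlhs : ((Matrix.of fun x y : Fin a × Fin s =>
        T x (⟨(y.1 : ℕ), by have := y.1.isLt; omega⟩, y.2)) *
          genJordanBlock F s a p) x y
        = ∑ k : Fin a × Fin s, T x (e k) * genJordanBlock F s b p (e k) (e y) := by
      rw [Matrix.mul_apply]
      apply Finset.sum_congr rfl
      intro k _
      rw [hGb k]
      rfl
    rw [hrhs, hlhs, Matrix.mul_apply]
    rw [show (∑ k : Fin a × Fin s, T x (e k) * genJordanBlock F s b p (e k) (e y)) =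
        ∑ k' ∈ Finset.univ.map ⟨e, hinj⟩, T x k' * genJordanBlock F s b p k' (e y) from by
      rw [Finset.sum_map]; simp only [Function.Embedding.coeFn_mk]]
    apply Finset.sum_subset (Finset.subset_univ _)
    intro k' _ hk'
    have hk2 : a ≤ (k'.1 : ℕ) := by
      by_contra hlt
      push_neg at hlt
      exact hk' (Finset.mem_map.mpr ⟨(⟨(k'.1 : ℕ), hlt⟩, k'.2), Finset.mem_univ _, by
        simp [he, Prod.ext_iff, Fin.ext_iff]⟩)
    rw [part1 x k' hk2, zero_mul]
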